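/- In the setting of the interval theorem, the sum D_left + D_now + D_right is at most the remaining degree b_1^{(k)} of the node being processed; in particular for k=1, Σ_{h=1}^{α_1−1}(z_h−b'_h) + (z_{α_1}−b'_{α_1}) + min{0, min_{r>α_1} Σ_{h=α_1+1}^{r}(z_h−b'_h)} ≤ b_1. -/

import Mathlib

/-- Conjugate vector: `zconj m a h = |{i : a i ≥ h}|`. -/
def zconj (m : ℕ) (a : Fin m → ℕ) (h : ℕ) : ℕ :=
  (Finset.univ.filter (fun i => h ≤ a i)).card

/-- The tail `b' = (b 1, …, b n)` of `b`, padded with zeros. -/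
def bpad (n : ℕ) (b : Fin (n + 1) → ℕ) (h : ℕ) : ℕ :=
  if h2 : h < n + 1 then b ⟨h, h2⟩ else 0

open Finset

private lemma sum_zconj (m n : ℕ) (a : Fin m → ℕ) (hmax : ∀ i, a i ≤ n + 1) :
    ∑ h ∈ Icc 1 (n+1), zconj m a h = ∑ i, a i := by
  unfold zconj
  simp only [card_filter]
  rw [Finset.sum_comm]
  refine Finset.sum_congr rfl fun i _ => ?_
  rw [← card_filter]
  have h : (Icc 1 (n+1)).filter (fun h => h ≤ a i) = Icc 1 (a i) := by
    ext h; simp only [mem_filter, mem_Icc]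
    have := hmax i; omega
  rw [h, Nat.card_Icc]; omega

private lemma sum_bpad (n : ℕ) (b : Fin (n+1) → ℕ) :
    ∑ h ∈ Icc 1 (n+1), bpad n b h + b 0 = ∑ j, b j := by
  have h0 : ∑ j, b j = ∑ h ∈ range (n+1), bpad n b h := by
    rw [← Fin.sum_univ_eq_sum_range (fun h => bpad n b h) (n+1)]
    refine Finset.sum_congr rfl fun j _ => ?_
    simp [bpad, j.isLt]
  have h1 : ∑ h ∈ range (n+1), bpad n b h
      = ∑ h ∈ range n, bpad n b (h+1) + bpad n b 0 := Finset.sum_range_succ' _ _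
  have h2 : bpad n b 0 = b 0 := by simp [bpad]
  have h3 : ∑ h ∈ Icc 1 (n+1), bpad n b h = ∑ h ∈ range n, bpad n b (h+1) + bpad n b (n+1) := by
    rw [← Finset.Ico_add_one_right_eq_Icc]
    rw [Finset.sum_Ico_eq_sum_range]
    simp [Finset.sum_range_succ, Nat.add_comm 1]
  have h4 : bpad n b (n+1) = 0 := by simp [bpad]
  omega


/-- `D_left + D_now + D_right ≤ b 0`: with `z` the conjugate of `a`, `b'` the tail of `b`
padded with zeros, `Σa = Σb` and all degrees at most the number of `b`-nodes,
`Σ_{h<α}(z_h−b'_h) + (z_α−b'_α) + min{0, min_{r>α} Σ_{h=α+1}^r (z_h−b'_h)} ≤ b 0`. -/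
theorem stmt9 (m n : ℕ) (a : Fin m → ℕ) (b : Fin (n + 1) → ℕ)
    (hb : Antitone b) (hsum : ∑ i, a i = ∑ j, b j) (hmax : ∀ i, a i ≤ n + 1)
    (α : ℕ) (hα : 1 ≤ α) :
    (∑ h ∈ Finset.Icc 1 (α - 1), ((zconj m a h : ℤ) - (bpad n b h : ℤ)))
      + ((zconj m a α : ℤ) - (bpad n b α : ℤ))
      + min (sInf {s : ℤ | ∃ r ∈ Finset.Icc (α + 1) (n + 1),
          s = ∑ h ∈ Finset.Icc (α + 1) r, ((zconj m a h : ℤ) - (bpad n b h : ℤ))}) 0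
    ≤ (b 0 : ℤ) := by
  set S : ℕ → ℤ := fun h => (zconj m a h : ℤ) - (bpad n b h : ℤ) with hS
  have hStot : ∑ h ∈ Icc 1 (n+1), S h = (b 0 : ℤ) := by
    have : ∑ h ∈ Icc 1 (n+1), S h
        = (∑ h ∈ Icc 1 (n+1), (zconj m a h : ℤ)) - ∑ h ∈ Icc 1 (n+1), (bpad n b h : ℤ) := by
      simp [hS, Finset.sum_sub_distrib]
    rw [this]
    push_cast [← Nat.cast_sum]
    rw [sum_zconj m n a hmax, hsum]
    have := sum_bpad n b
    push_cast [← this]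
    ring
  have hSzero : ∀ h, n + 2 ≤ h → S h = 0 := by
    intro h hh
    have hz : zconj m a h = 0 := by
      unfold zconj
      rw [Finset.card_eq_zero, Finset.filter_eq_empty_iff]
      intro i _
      have := hmax i; omega
    have hbp : bpad n b h = 0 := by
      unfold bpad
      rw [dif_neg]; omega
    simp [hS, hz, hbp]
  obtain ⟨α', rfl⟩ : ∃ α', α = α' + 1 := ⟨α - 1, by omega⟩
  have hsplit : ∑ h ∈ Icc 1 (α' + 1 - 1), S h + S (α' + 1) = ∑ h ∈ Icc 1 (α' + 1), S h := by
    rw [Finset.sum_Icc_succ_top (by omega : 1 ≤ α' + 1)]; norm_num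
  rw [add_assoc] at *
  rw [show (∑ h ∈ Finset.Icc 1 (α' + 1 - 1), S h) + (S (α'+1) + min _ 0)
      = (∑ h ∈ Icc 1 (α'+1), S h) + min _ 0 by rw [← hsplit]; ring]
  by_cases hcase : α' + 1 ≤ n
  · -- nonempty tail
    set T : Set ℤ := {s : ℤ | ∃ r ∈ Finset.Icc (α' + 1 + 1) (n + 1),
        s = ∑ h ∈ Finset.Icc (α' + 1 + 1) r, S h} with hT
    have hTeq : T = ↑((Icc (α' + 2) (n + 1)).image (fun r => ∑ h ∈ Icc (α' + 2) r, S h)) := by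
      ext s
      simp [hT, eq_comm]
      constructor <;> rintro ⟨r, hr, rfl⟩ <;> exact ⟨r, by omega, rfl⟩
    have hfin : T.Finite := by rw [hTeq]; exact Finset.finite_toSet _
    have hmem : (∑ h ∈ Icc (α' + 2) (n+1), S h) ∈ T := ⟨n+1, by simp; omega, rfl⟩
    have hle : sInf T ≤ ∑ h ∈ Icc (α' + 2) (n+1), S h :=
      csInf_le hfin.bddBelow hmem
    have := min_le_left (sInf T) 0
    have hsum2 : ∑ h ∈ Icc 1 (α'+1), S h + ∑ h ∈ Icc (α' + 2) (n+1), S h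
        = ∑ h ∈ Icc 1 (n+1), S h := by
      rw [show Icc 1 (α'+1) = Ioc 0 (α'+1) by (rw [← Finset.Icc_add_one_left_eq_Ioc]; rfl),
          show Icc (α'+2) (n+1) = Ioc (α'+1) (n+1) by (rw [← Finset.Icc_add_one_left_eq_Ioc]; rfl),
          show Icc 1 (n+1) = Ioc 0 (n+1) by (rw [← Finset.Icc_add_one_left_eq_Ioc]; rfl)]
      exact Finset.sum_Ioc_consecutive _ (by omega) (by omega)
    have : min (sInf T) 0 ≤ ∑ h ∈ Icc (α' + 2) (n+1), S h := le_trans (min_le_left _ _) hle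
    omega
  · -- empty tail: set T is empty
    have hempty : {s : ℤ | ∃ r ∈ Finset.Icc (α' + 1 + 1) (n + 1),
        s = ∑ h ∈ Finset.Icc (α' + 1 + 1) r, S h} = ∅ := by
      ext s
      simp only [Set.mem_setOf_eq, Set.mem_empty_iff_false, iff_false, not_exists]
      intro r hr
      simp only [mem_Icc] at hr
      omega
    rw [hempty, Int.csInf_empty]
    simp only [min_self, add_zero]
    have hbig : ∑ h ∈ Icc 1 (α'+1), S h = ∑ h ∈ Icc 1 (n+1), S h := by
      rw [show Icc 1 (α'+1) = Ioc 0 (α'+1) by (rw [← Finset.Icc_add_one_left_eq_Ioc]; rfl),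
          show Icc 1 (n+1) = Ioc 0 (n+1) by (rw [← Finset.Icc_add_one_left_eq_Ioc]; rfl),
          ← Finset.sum_Ioc_consecutive S (show 0 ≤ n+1 by omega) (show n+1 ≤ α'+1 by omega)]
      have : ∑ h ∈ Ioc (n+1) (α'+1), S h = 0 := by
        apply Finset.sum_eq_zero
        intro h hh
        simp only [mem_Ioc] at hh
        exact hSzero h (by omega)
      omega
    omega
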